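/- Under Assumption 1.1, there exist M > 0 and R_0 > 1 such that for every (x,ξ) ∈ ℝ^{2n} with |x| > R_0 and ξ ≠ 0, one has H_{p_m}(H_{p_m}(|x|²))(x,ξ) ≥ M|ξ|^{2(m−1)}. -/

import Mathlib

open scoped BigOperators Classical FourierTransform RealInnerProductSpace ContDiff
open MeasureTheory Filter

noncomputable section

/-- Euclidean space ℝ^n. -/
abbrev Euc (n : ℕ) := EuclideanSpace ℝ (Fin n)

namespace Paper

/-- total degree `|α|` of a multi-index -/
def mdeg {n : ℕ} (α : Fin n → ℕ) : ℕ := ∑ j, α j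

/-- the finite set of multi-indices of total degree at most `m` -/
def midx (n m : ℕ) : Finset (Fin n → ℕ) :=
  (Finset.univ.image fun f : Fin n → Fin (m + 1) => fun j => ((f j : ℕ))).filter
    fun α => mdeg α ≤ m

/-- monomial `ξ^α` -/
def mono {n : ℕ} (ξ : Euc n) (α : Fin n → ℕ) : ℝ := ∏ j, (ξ j) ^ (α j)

/-- Japanese bracket `⟨x⟩ = (1+|x|²)^{1/2}` -/
def jap {n : ℕ} (x : Euc n) : ℝ := Real.sqrt (1 + ‖x‖ ^ 2)

/-- Japanese bracket of a real number -/
def japR (t : ℝ) : ℝ := Real.sqrt (1 + t ^ 2)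

/-- partial derivative `∂_j` of a real-valued function -/
def pd {n : ℕ} (j : Fin n) (f : Euc n → ℝ) : Euc n → ℝ :=
  fun x => fderiv ℝ f x (EuclideanSpace.single j 1)

/-- iterated partial derivative `∂^α` of a real-valued function -/
def pdI {n : ℕ} (α : Fin n → ℕ) (f : Euc n → ℝ) : Euc n → ℝ :=
  (List.finRange n).foldr (fun j g => (pd j)^[α j] g) f

/-- partial derivative `∂_j` of a complex-valued function -/
def pdC {n : ℕ} (j : Fin n) (f : Euc n → ℂ) : Euc n → ℂ :=
  fun x => fderiv ℝ f x (EuclideanSpace.single j 1)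

/-- iterated partial derivative `∂^α` of a complex-valued function -/
def pdIC {n : ℕ} (α : Fin n → ℕ) (f : Euc n → ℂ) : Euc n → ℂ :=
  (List.finRange n).foldr (fun j g => (pdC j)^[α j] g) f

/-- `D^α = (−i)^{|α|} ∂^α` where `D = -i∂_x` -/
def DOp {n : ℕ} (α : Fin n → ℕ) (f : Euc n → ℂ) : Euc n → ℂ :=
  fun x => (-Complex.I) ^ (mdeg α) * pdIC α f x

/-- product of binomial coefficients of multi-indices: `(α choose β)` -/
def mchoose {n : ℕ} (α β : Fin n → ℕ) : ℕ := ∏ j, (α j).choose (β j)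

/-- The Weyl quantization `P = Op(p)` of the real polynomial symbol
`p(x,ξ) = ∑_{|α| ≤ m} a_α(x) ξ^α`, as a differential operator:
`Pu = ∑_{|α|≤m} 2^{-|α|} ∑_{β ≤ α} (α choose β) D^β (a_α · D^{α-β} u)`. -/
def Pop {n : ℕ} (m : ℕ) (a : (Fin n → ℕ) → Euc n → ℝ) (u : Euc n → ℂ) : Euc n → ℂ :=
  fun x => ∑ α ∈ midx n m, ∑ β ∈ (midx n m).filter (fun β => β ≤ α),
    ((2 : ℂ))⁻¹ ^ (mdeg α) * (mchoose α β : ℂ) *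
      DOp β (fun z => (a α z : ℂ) * DOp (α - β) u z) x

/-- the full symbol `p(x,ξ) = ∑_{|α| ≤ m} a_α(x) ξ^α` -/
def psym {n : ℕ} (m : ℕ) (a : (Fin n → ℕ) → Euc n → ℝ) (x ξ : Euc n) : ℝ :=
  ∑ α ∈ midx n m, a α x * mono ξ α

/-- the principal symbol `p_m(x,ξ) = ∑_{|α| = m} a_α(x) ξ^α` -/
def pPrin {n : ℕ} (m : ℕ) (a : (Fin n → ℕ) → Euc n → ℝ) (x ξ : Euc n) : ℝ :=
  ∑ α ∈ (midx n m).filter (fun α => mdeg α = m), a α x * mono ξ α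

/-- the constant-coefficient model symbol `p_0(ξ) = ∑_{|α| = m} b_α ξ^α` -/
def p0sym {n : ℕ} (m : ℕ) (b : (Fin n → ℕ) → ℝ) (ξ : Euc n) : ℝ :=
  ∑ α ∈ midx n m, b α * mono ξ α

/-- gradient of a real-valued function on Euclidean space -/
def gradE {n : ℕ} (f : Euc n → ℝ) (x : Euc n) : Euc n :=
  (EuclideanSpace.equiv (Fin n) ℝ).symm (fun j => pd j f x)

/-- Assumption 1.1 of the paper: `p` is real principal type with asymptotically
constant coefficients. -/
structure Assumption11 (n m : ℕ) (μ : ℝ) (a : (Fin n → ℕ) → Euc n → ℝ)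
    (b : (Fin n → ℕ) → ℝ) : Prop where
  m_ge : 2 ≤ m
  mu_pos : 0 < μ
  smooth : ∀ α, ContDiff ℝ ∞ (a α)
  bzero : ∀ α : Fin n → ℕ, mdeg α < m → b α = 0
  decay : ∀ α ∈ midx n m, ∀ β : Fin n → ℕ, ∃ C > 0, ∀ x : Euc n,
    |pdI β (fun z => a α z - b α) x| ≤ C * jap x ^ (-(μ + (mdeg β : ℝ)))
  grad_bounds : ∃ C > 0, ∀ x ξ : Euc n,
    (C⁻¹ * ‖ξ‖ ^ (m - 1) ≤ ‖gradE (p0sym m b) ξ‖ ∧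
      ‖gradE (p0sym m b) ξ‖ ≤ C * ‖ξ‖ ^ (m - 1)) ∧
    (C⁻¹ * ‖ξ‖ ^ (m - 1) ≤ ‖gradE (fun ζ => pPrin m a x ζ) ξ‖ ∧
      ‖gradE (fun ζ => pPrin m a x ζ) ξ‖ ≤ C * ‖ξ‖ ^ (m - 1))

/-- `(y, η)` is the (globally defined, C¹) Hamilton flow of the principal symbol `p_m`. -/
structure IsHamFlow {n : ℕ} (m : ℕ) (a : (Fin n → ℕ) → Euc n → ℝ)
    (y η : ℝ → Euc n → Euc n → Euc n) : Prop where
  init_y : ∀ x0 ξ0 : Euc n, y 0 x0 ξ0 = x0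
  init_η : ∀ x0 ξ0 : Euc n, η 0 x0 ξ0 = ξ0
  ode_y : ∀ (t : ℝ) (x0 ξ0 : Euc n),
    HasDerivAt (fun s => y s x0 ξ0)
      (gradE (fun ζ => pPrin m a (y t x0 ξ0) ζ) (η t x0 ξ0)) t
  ode_η : ∀ (t : ℝ) (x0 ξ0 : Euc n),
    HasDerivAt (fun s => η s x0 ξ0)
      (-(gradE (fun w => pPrin m a w (η t x0 ξ0)) (y t x0 ξ0))) t
  c1 : ContDiff ℝ 1 (fun q : ℝ × Euc n × Euc n =>
        (y q.1 q.2.1 q.2.2, η q.1 q.2.1 q.2.2))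

/-- Assumption 1.2: null non-trapping, `|y(t)| → ∞` as `|t| → ∞` on the
characteristic set. -/
def NullNonTrapping {n : ℕ} (m : ℕ) (a : (Fin n → ℕ) → Euc n → ℝ)
    (y : ℝ → Euc n → Euc n → Euc n) : Prop :=
  ∀ x0 ξ0 : Euc n, pPrin m a x0 ξ0 = 0 → ξ0 ≠ 0 →
    Tendsto (fun t : ℝ => ‖y t x0 ξ0‖) atTop atTop ∧
    Tendsto (fun t : ℝ => ‖y t x0 ξ0‖) atBot atTop

/-- a test function: smooth and compactly supported -/
def IsTestFun {n : ℕ} (φ : Euc n → ℂ) : Prop :=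
  ContDiff ℝ ∞ φ ∧ HasCompactSupport φ

/-- `P u = z u + f` in the sense of (tempered) distributions; since `P` is formally
self-adjoint this is expressed by testing against `P φ` for test functions `φ`,
with the pairing `⟨u, φ⟩ = ∫ u · conj φ`. -/
def PEqDistrib {n : ℕ} (m : ℕ) (a : (Fin n → ℕ) → Euc n → ℝ) (z : ℂ)
    (u f : Euc n → ℂ) : Prop :=
  ∀ φ : Euc n → ℂ, IsTestFun φ →
    ∫ x, u x * (starRingEnd ℂ) (Pop m a φ x) =
      z * ∫ x, u x * (starRingEnd ℂ) (φ x) + ∫ x, f x * (starRingEnd ℂ) (φ x)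

/-- the Fourier multiplier `⟨D⟩^s` applied to a (Schwartz-class) function, where
`D = -i ∂` (hence, with Mathlib's `2π`-convention for the Fourier transform, the
symbol is `(1 + (2π)²|ξ|²)^{s/2}`). -/
def japDs {n : ℕ} (s : ℝ) (φ : Euc n → ℂ) : Euc n → ℂ :=
  𝓕⁻ (fun ξ : Euc n => (((1 + (2 * Real.pi) ^ 2 * ‖ξ‖ ^ 2) ^ (s / 2) : ℝ) : ℂ) * 𝓕 φ ξ)

/-- membership in the weighted Sobolev space `H^{s,ℓ}`: `⟨D⟩^s(⟨x⟩^ℓ u) ∈ L²`,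
expressed by duality against Schwartz functions (the transpose of `⟨D⟩^s` is
`⟨D⟩^s` itself since its symbol is even). -/
def MemHsl {n : ℕ} (s ℓ : ℝ) (u : Euc n → ℂ) : Prop :=
  ∃ g : Euc n → ℂ, MemLp g 2 (volume : Measure (Euc n)) ∧
    ∀ φ : SchwartzMap (Euc n) ℂ,
      (∫ x, u x * ((jap x ^ ℓ : ℝ) : ℂ) * japDs s (⇑φ) x) = ∫ x, g x * φ x

/-- partial derivative in the first (`x`) variable of a function on phase space -/
def pdX {n : ℕ} (j : Fin n) (f : Euc n → Euc n → ℝ) : Euc n → Euc n → ℝ :=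
  fun x ξ => fderiv ℝ (fun w => f w ξ) x (EuclideanSpace.single j 1)

/-- partial derivative in the second (`ξ`) variable of a function on phase space -/
def pdXi {n : ℕ} (j : Fin n) (f : Euc n → Euc n → ℝ) : Euc n → Euc n → ℝ :=
  fun x ξ => fderiv ℝ (fun ζ => f x ζ) ξ (EuclideanSpace.single j 1)

/-- iterated `x`-derivative `∂_x^α` on phase space -/
def pdIX {n : ℕ} (α : Fin n → ℕ) (f : Euc n → Euc n → ℝ) : Euc n → Euc n → ℝ :=
  (List.finRange n).foldr (fun j g => (pdX j)^[α j] g) f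

/-- iterated `ξ`-derivative `∂_ξ^β` on phase space -/
def pdIXi {n : ℕ} (β : Fin n → ℕ) (f : Euc n → Euc n → ℝ) : Euc n → Euc n → ℝ :=
  (List.finRange n).foldr (fun j g => (pdXi j)^[β j] g) f

/-- Poisson bracket `{a,f} = ∂_ξ a·∂_x f − ∂_x a·∂_ξ f` (also the Hamilton
derivative `H_a f`). -/
def hamD {n : ℕ} (a f : Euc n → Euc n → ℝ) : Euc n → Euc n → ℝ :=
  fun x ξ => ∑ j, (pdXi j a x ξ * pdX j f x ξ - pdX j a x ξ * pdXi j f x ξ)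

section Aux
variable {n : ℕ}

lemma abs_coord_le_norm (ξ : Euc n) (i : Fin n) : |ξ i| ≤ ‖ξ‖ := by
  have h : ‖ξ‖ = Real.sqrt (∑ j, ‖ξ j‖ ^ 2) := EuclideanSpace.norm_eq ξ
  rw [h]
  have h1 : |ξ i| = Real.sqrt (‖ξ i‖ ^ 2) := by
    rw [Real.sqrt_sq_eq_abs]; simp [Real.norm_eq_abs]
  rw [h1]
  apply Real.sqrt_le_sqrt
  exact Finset.single_le_sum (f := fun j => ‖ξ j‖ ^ 2) (fun j _ => by positivity)
    (Finset.mem_univ i)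

lemma abs_mono_le (ξ : Euc n) (α : Fin n → ℕ) : |mono ξ α| ≤ ‖ξ‖ ^ mdeg α := by
  rw [mono, Finset.abs_prod, mdeg, ← Finset.prod_pow_eq_pow_sum]
  apply Finset.prod_le_prod (fun j _ => abs_nonneg _)
  intro j _
  rw [abs_pow]
  exact pow_le_pow_left₀ (abs_nonneg _) (abs_coord_le_norm ξ j) _

lemma mdeg_single (j : Fin n) : mdeg (Pi.single j 1) = 1 := by
  simp [mdeg]

lemma le_mdeg (α : Fin n → ℕ) (j : Fin n) : α j ≤ mdeg α :=
  Finset.single_le_sum (fun i _ => Nat.zero_le _) (Finset.mem_univ j)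

lemma sub_single_apply (α : Fin n → ℕ) (j i : Fin n) :
    (α - Pi.single j 1 : Fin n → ℕ) i = if i = j then α j - 1 else α i := by
  by_cases h : i = j <;> simp [h, Pi.sub_apply, Pi.single_apply]

lemma mdeg_sub_single_add_one (α : Fin n → ℕ) (j : Fin n) (h : 1 ≤ α j) :
    mdeg (α - Pi.single j 1 : Fin n → ℕ) + 1 = mdeg α := by
  unfold mdeg
  rw [← Finset.add_sum_erase _ _ (Finset.mem_univ j),
    ← Finset.add_sum_erase _ α (Finset.mem_univ j)]
  have h1 : ∑ i ∈ Finset.univ.erase j, (α - Pi.single j 1 : Fin n → ℕ) i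
      = ∑ i ∈ Finset.univ.erase j, α i := by
    apply Finset.sum_congr rfl
    intro i hi
    rw [sub_single_apply, if_neg (Finset.mem_erase.mp hi).1]
  rw [h1, sub_single_apply, if_pos rfl]
  omega

end Aux
section Aux2
variable {n : ℕ}

lemma hasFDerivAt_mono (α : Fin n → ℕ) (ξ : Euc n) :
    HasFDerivAt (fun ζ : Euc n => mono ζ α)
      (∑ j, ((α j : ℝ) * mono ξ (α - Pi.single j 1 : Fin n → ℕ)) •
        (EuclideanSpace.proj j : Euc n →L[ℝ] ℝ)) ξ := by
  have h : ∀ j ∈ Finset.univ, HasFDerivAt (fun ζ : Euc n => (ζ j) ^ (α j))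
      (((α j : ℝ) * (ξ j) ^ (α j - 1)) • (EuclideanSpace.proj j : Euc n →L[ℝ] ℝ)) ξ := by
    intro j _
    have hp : HasFDerivAt (fun ζ : Euc n => ζ j)
        (EuclideanSpace.proj j : Euc n →L[ℝ] ℝ) ξ :=
      (EuclideanSpace.proj j : Euc n →L[ℝ] ℝ).hasFDerivAt
    have hpow := (hasDerivAt_pow (α j) (ξ j)).comp_hasFDerivAt ξ hp
    exact hpow
  have h2 := HasFDerivAt.finset_prod (u := Finset.univ) h
  have hfun : (fun ζ : Euc n => ∏ j, (ζ j) ^ (α j)) = fun ζ => mono ζ α := by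
    funext ζ; rfl
  rw [hfun] at h2
  refine h2.congr_fderiv ?_
  apply Finset.sum_congr rfl
  intro j _
  rw [smul_smul]
  congr 1
  by_cases hj : 1 ≤ α j
  · have hm : mono ξ (α - Pi.single j 1 : Fin n → ℕ)
        = (ξ j) ^ (α j - 1) * ∏ i ∈ Finset.univ.erase j, (ξ i) ^ (α i) := by
      rw [mono, ← Finset.mul_prod_erase _ _ (Finset.mem_univ j)]
      rw [sub_single_apply, if_pos rfl]
      congr 1
      apply Finset.prod_congr rfl
      intro i hi
      rw [sub_single_apply, if_neg (Finset.mem_erase.mp hi).1]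
    rw [hm]; ring
  · have : α j = 0 := by omega
    simp [this]

lemma sum_smul_proj_apply (c : Fin n → ℝ) (j : Fin n) :
    (∑ i, c i • (EuclideanSpace.proj i : Euc n →L[ℝ] ℝ))
      (EuclideanSpace.single j (1 : ℝ)) = c j := by
  rw [ContinuousLinearMap.sum_apply]
  have h : ∀ i, (c i • (EuclideanSpace.proj i : Euc n →L[ℝ] ℝ))
      (EuclideanSpace.single j (1 : ℝ)) = if i = j then c i else 0 := by
    intro i
    rw [ContinuousLinearMap.smul_apply]
    have : (EuclideanSpace.proj i : Euc n →L[ℝ] ℝ) (EuclideanSpace.single j (1 : ℝ))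
        = (EuclideanSpace.single j (1 : ℝ)) i := rfl
    rw [this, EuclideanSpace.single_apply]
    by_cases h : i = j <;> simp [h]
  rw [Finset.sum_congr rfl (fun i _ => h i)]
  simp

lemma pd_of_hasFDerivAt {f : Euc n → ℝ} {L : Euc n →L[ℝ] ℝ} {x : Euc n}
    (h : HasFDerivAt f L x) (j : Fin n) :
    pd j f x = L (EuclideanSpace.single j 1) := by rw [pd, h.fderiv]

lemma pd_mono (α : Fin n → ℕ) (ξ : Euc n) (j : Fin n) :
    pd j (fun ζ => mono ζ α) ξ = (α j : ℝ) * mono ξ (α - Pi.single j 1 : Fin n → ℕ) := by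
  rw [pd_of_hasFDerivAt (hasFDerivAt_mono α ξ) j, sum_smul_proj_apply]

lemma normsq_eq (x : Euc n) : ‖x‖ ^ 2 = ∑ i, (x i) ^ 2 := by
  rw [EuclideanSpace.norm_eq, Real.sq_sqrt (by positivity)]
  simp [Real.norm_eq_abs, sq_abs]

lemma gradE_normsq (f : Euc n → ℝ) (x : Euc n) :
    ‖gradE f x‖ ^ 2 = ∑ j, (pd j f x) ^ 2 := by
  rw [normsq_eq]
  rfl

lemma pdI_one (j : Fin n) (f : Euc n → ℝ) :
    pdI (Pi.single j 1) f = pd j f := by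
  unfold pdI
  have key : ∀ l : List (Fin n), l.Nodup →
      ((j ∈ l → l.foldr (fun i g => (pd i)^[(Pi.single j 1 : Fin n → ℕ) i] g) f = pd j f) ∧
       (j ∉ l → l.foldr (fun i g => (pd i)^[(Pi.single j 1 : Fin n → ℕ) i] g) f = f)) := by
    intro l
    induction l with
    | nil => exact fun _ => ⟨fun h => absurd h List.not_mem_nil, fun _ => rfl⟩
    | cons i t ih =>
      intro hnd
      obtain ⟨hit, hnt⟩ := List.nodup_cons.mp hnd
      constructor
      · intro hm
        rcases List.mem_cons.mp hm with h | h
        · subst h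
          simp only [List.foldr_cons, Pi.single_eq_same, Function.iterate_one]
          rw [(ih hnt).2 hit]
        · have hij : i ≠ j := fun he => hit (he ▸ h)
          simp only [List.foldr_cons, Pi.single_eq_of_ne hij, Function.iterate_zero, id]
          exact (ih hnt).1 h
      · intro hm
        have hij : i ≠ j := fun he => hm (he ▸ (List.mem_cons_self : i ∈ i :: t))
        have hjt : j ∉ t := fun h => hm (List.mem_cons_of_mem i h)
        simp only [List.foldr_cons, Pi.single_eq_of_ne hij, Function.iterate_zero, id]
        exact (ih hnt).2 hjt
  exact (key _ (List.nodup_finRange n)).1 (List.mem_finRange j)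

end Aux2
section Aux3
variable {n : ℕ}

/-- general ξ-derivative of a polynomial `ζ ↦ ∑ c α * mono ζ (β α)` -/
lemma hasFDerivAt_poly (c : (Fin n → ℕ) → ℝ) (S : Finset (Fin n → ℕ))
    (β : (Fin n → ℕ) → (Fin n → ℕ)) (ξ : Euc n) :
    HasFDerivAt (fun ζ : Euc n => ∑ α ∈ S, c α * mono ζ (β α))
      (∑ j, (∑ α ∈ S, c α * ((β α j : ℝ) *
          mono ξ (β α - Pi.single j 1 : Fin n → ℕ))) •
        (EuclideanSpace.proj j : Euc n →L[ℝ] ℝ)) ξ := by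
  have h1 : HasFDerivAt (fun ζ : Euc n => ∑ α ∈ S, c α * mono ζ (β α))
      (∑ α ∈ S, c α • (∑ j, (((β α) j : ℝ) *
          mono ξ (β α - Pi.single j 1 : Fin n → ℕ)) •
        (EuclideanSpace.proj j : Euc n →L[ℝ] ℝ))) ξ :=
    HasFDerivAt.fun_sum fun α _ => (hasFDerivAt_mono (β α) ξ).const_mul (c α)
  convert h1 using 1
  simp only [Finset.smul_sum, smul_smul]
  rw [Finset.sum_comm]
  exact Finset.sum_congr rfl fun j _ => Finset.sum_smul

lemma pd_poly (c : (Fin n → ℕ) → ℝ) (S : Finset (Fin n → ℕ))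
    (β : (Fin n → ℕ) → (Fin n → ℕ)) (ξ : Euc n) (j : Fin n) :
    pd j (fun ζ : Euc n => ∑ α ∈ S, c α * mono ζ (β α)) ξ
      = ∑ α ∈ S, c α * ((β α j : ℝ) * mono ξ (β α - Pi.single j 1 : Fin n → ℕ)) := by
  rw [pd_of_hasFDerivAt (hasFDerivAt_poly c S β ξ) j, sum_smul_proj_apply]

end Aux3
section Aux4
variable {n : ℕ}

/-- the multi-indices of total degree exactly `m` -/
def Sm (n m : ℕ) : Finset (Fin n → ℕ) := (midx n m).filter (fun α => mdeg α = m)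

/-- coefficient function for the ξ-gradient of `pPrin` -/
def gf (m : ℕ) (a : (Fin n → ℕ) → Euc n → ℝ) (j : Fin n) (x ξ : Euc n) : ℝ :=
  ∑ α ∈ Sm n m, a α x * ((α j : ℝ) * mono ξ (α - Pi.single j 1 : Fin n → ℕ))

lemma pdXi_pPrin (m : ℕ) (a : (Fin n → ℕ) → Euc n → ℝ) (x ξ : Euc n) (j : Fin n) :
    pdXi j (pPrin m a) x ξ = gf m a j x ξ :=
  pd_poly (fun α => a α x) (Sm n m) id ξ j

lemma pd_pPrin_xi (m : ℕ) (a : (Fin n → ℕ) → Euc n → ℝ) (x ξ : Euc n) (j : Fin n) :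
    pd j (fun ζ => pPrin m a x ζ) ξ = gf m a j x ξ :=
  pd_poly (fun α => a α x) (Sm n m) id ξ j

lemma pdX_pPrin (m : ℕ) (a : (Fin n → ℕ) → Euc n → ℝ) (x ξ : Euc n) (j : Fin n)
    (hda : ∀ α, DifferentiableAt ℝ (a α) x) :
    pdX j (pPrin m a) x ξ = ∑ α ∈ Sm n m, mono ξ α * pd j (a α) x := by
  have h : HasFDerivAt (fun w => pPrin m a w ξ)
      (∑ α ∈ Sm n m, (mono ξ α) • fderiv ℝ (a α) x) x :=
    HasFDerivAt.fun_sum fun α _ => (hda α).hasFDerivAt.mul_const (mono ξ α)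
  rw [pdX, h.fderiv]
  simp [ContinuousLinearMap.sum_apply, ContinuousLinearMap.smul_apply, pd, smul_eq_mul]

lemma hasFDerivAt_normsq (x : Euc n) :
    HasFDerivAt (fun w : Euc n => ‖w‖ ^ 2)
      (∑ i, (2 * x i) • (EuclideanSpace.proj i : Euc n →L[ℝ] ℝ)) x := by
  have hfun : (fun w : Euc n => ‖w‖ ^ 2) = fun w => ∑ i, (w i) ^ 2 :=
    funext fun w => normsq_eq w
  rw [hfun]
  apply HasFDerivAt.fun_sum
  intro i _
  have hp : HasFDerivAt (fun ζ : Euc n => ζ i)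
      (EuclideanSpace.proj i : Euc n →L[ℝ] ℝ) x :=
    (EuclideanSpace.proj i : Euc n →L[ℝ] ℝ).hasFDerivAt
  have := (hasDerivAt_pow 2 (x i)).comp_hasFDerivAt x hp
  simp [smul_smul] at this
  exact this

lemma pdX_normsq (x ξ : Euc n) (j : Fin n) :
    pdX j (fun w (_ : Euc n) => ‖w‖ ^ 2) x ξ = 2 * x j := by
  rw [pdX, (hasFDerivAt_normsq x).fderiv]
  exact sum_smul_proj_apply _ j

lemma pdXi_normsq (x ξ : Euc n) (j : Fin n) :
    pdXi j (fun w (_ : Euc n) => ‖w‖ ^ 2) x ξ = 0 := by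
  rw [pdXi]
  simp [fderiv_const]

lemma hamD_inner (m : ℕ) (a : (Fin n → ℕ) → Euc n → ℝ) :
    hamD (pPrin m a) (fun w (_ : Euc n) => ‖w‖ ^ 2)
      = fun x ξ => ∑ k, gf m a k x ξ * (2 * x k) := by
  funext x ξ
  rw [hamD]
  apply Finset.sum_congr rfl
  intro k _
  rw [pdXi_pPrin, pdX_normsq, pdXi_normsq, mul_zero, sub_zero]

lemma gradE_pPrin_normsq (m : ℕ) (a : (Fin n → ℕ) → Euc n → ℝ) (x ξ : Euc n) :
    ‖gradE (fun ζ => pPrin m a x ζ) ξ‖ ^ 2 = ∑ j, (gf m a j x ξ) ^ 2 := by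
  rw [gradE_normsq]
  exact Finset.sum_congr rfl fun j _ => by rw [pd_pPrin_xi]

end Aux4
section Aux5
variable {n : ℕ}

lemma proj_apply_single (k j : Fin n) :
    (EuclideanSpace.proj k : Euc n →L[ℝ] ℝ) (EuclideanSpace.single j (1 : ℝ))
      = if k = j then 1 else 0 := by
  have h : (EuclideanSpace.proj k : Euc n →L[ℝ] ℝ) (EuclideanSpace.single j (1 : ℝ))
      = (EuclideanSpace.single j (1 : ℝ)) k := rfl
  rw [h, EuclideanSpace.single_apply]

lemma gf_as_poly (m : ℕ) (a : (Fin n → ℕ) → Euc n → ℝ) (k : Fin n) (x : Euc n) :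
    (fun ζ => gf m a k x ζ)
      = fun ζ => ∑ α ∈ Sm n m, (a α x * (α k : ℝ)) * mono ζ (α - Pi.single k 1 : Fin n → ℕ) := by
  funext ζ
  exact Finset.sum_congr rfl fun α _ => by rw [mul_assoc]

lemma pdXi_F (m : ℕ) (a : (Fin n → ℕ) → Euc n → ℝ) (x ξ : Euc n) (j : Fin n) :
    pdXi j (fun w ζ => ∑ k, gf m a k w ζ * (2 * w k)) x ξ
      = ∑ k, (2 * x k) * (∑ α ∈ Sm n m, (a α x * (α k : ℝ)) *
          (((α - Pi.single k 1 : Fin n → ℕ) j : ℝ) *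
            mono ξ (α - Pi.single k 1 - Pi.single j 1 : Fin n → ℕ))) := by
  have hg : ∀ k : Fin n, HasFDerivAt (fun ζ => gf m a k x ζ)
      (∑ i, (∑ α ∈ Sm n m, (a α x * (α k : ℝ)) *
          (((α - Pi.single k 1 : Fin n → ℕ) i : ℝ) *
            mono ξ (α - Pi.single k 1 - Pi.single i 1 : Fin n → ℕ))) •
        (EuclideanSpace.proj i : Euc n →L[ℝ] ℝ)) ξ := by
    intro k
    rw [gf_as_poly]
    exact hasFDerivAt_poly (fun α => a α x * (α k : ℝ)) (Sm n m)
      (fun α => α - Pi.single k 1) ξ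
  have H : HasFDerivAt (fun ζ => ∑ k, gf m a k x ζ * (2 * x k))
      (∑ k, (2 * x k) • (∑ i, (∑ α ∈ Sm n m, (a α x * (α k : ℝ)) *
          (((α - Pi.single k 1 : Fin n → ℕ) i : ℝ) *
            mono ξ (α - Pi.single k 1 - Pi.single i 1 : Fin n → ℕ))) •
        (EuclideanSpace.proj i : Euc n →L[ℝ] ℝ))) ξ :=
    HasFDerivAt.fun_sum fun k _ => ((hg k).mul_const (2 * x k))
  rw [pdXi, H.fderiv, ContinuousLinearMap.sum_apply]
  apply Finset.sum_congr rfl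
  intro k _
  rw [ContinuousLinearMap.smul_apply, sum_smul_proj_apply, smul_eq_mul]

lemma pdX_F (m : ℕ) (a : (Fin n → ℕ) → Euc n → ℝ) (x ξ : Euc n) (j : Fin n)
    (hda : ∀ α, DifferentiableAt ℝ (a α) x) :
    pdX j (fun w ζ => ∑ k, gf m a k w ζ * (2 * w k)) x ξ
      = 2 * gf m a j x ξ + ∑ k, (2 * x k) * (∑ α ∈ Sm n m,
          ((α k : ℝ) * mono ξ (α - Pi.single k 1 : Fin n → ℕ)) * pd j (a α) x) := by
  have hg : ∀ k : Fin n, HasFDerivAt (fun w => gf m a k w ξ)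
      (∑ α ∈ Sm n m, ((α k : ℝ) * mono ξ (α - Pi.single k 1 : Fin n → ℕ)) •
        fderiv ℝ (a α) x) x :=
    fun k => HasFDerivAt.fun_sum fun α _ =>
      (hda α).hasFDerivAt.mul_const ((α k : ℝ) * mono ξ (α - Pi.single k 1 : Fin n → ℕ))
  have hx : ∀ k : Fin n, HasFDerivAt (fun w : Euc n => 2 * w k)
      ((2 : ℝ) • (EuclideanSpace.proj k : Euc n →L[ℝ] ℝ)) x :=
    fun k => (EuclideanSpace.proj k : Euc n →L[ℝ] ℝ).hasFDerivAt.const_mul 2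
  have H : HasFDerivAt (fun w : Euc n => ∑ k, gf m a k w ξ * (2 * w k))
      (∑ k, ((gf m a k x ξ) • ((2 : ℝ) • (EuclideanSpace.proj k : Euc n →L[ℝ] ℝ))
        + (2 * x k) • (∑ α ∈ Sm n m,
            ((α k : ℝ) * mono ξ (α - Pi.single k 1 : Fin n → ℕ)) •
              fderiv ℝ (a α) x))) x :=
    HasFDerivAt.fun_sum fun k _ => (hg k).mul (hx k)
  rw [pdX, H.fderiv, ContinuousLinearMap.sum_apply]
  have hterm : ∀ k : Fin n, ((gf m a k x ξ) • ((2 : ℝ) • (EuclideanSpace.proj k : Euc n →L[ℝ] ℝ))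
        + (2 * x k) • (∑ α ∈ Sm n m,
            ((α k : ℝ) * mono ξ (α - Pi.single k 1 : Fin n → ℕ)) •
              fderiv ℝ (a α) x)) (EuclideanSpace.single j 1)
      = gf m a k x ξ * (2 * (if k = j then 1 else 0))
        + (2 * x k) * (∑ α ∈ Sm n m,
            ((α k : ℝ) * mono ξ (α - Pi.single k 1 : Fin n → ℕ)) * pd j (a α) x) := by
    intro k
    simp only [ContinuousLinearMap.add_apply, ContinuousLinearMap.smul_apply,
      ContinuousLinearMap.sum_apply, smul_eq_mul, proj_apply_single, pd]
  rw [Finset.sum_congr rfl fun k _ => hterm k, Finset.sum_add_distrib]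
  have h2 : ∑ k, gf m a k x ξ * (2 * if k = j then 1 else 0) = 2 * gf m a j x ξ := by
    simp [mul_ite, Finset.sum_ite_eq, mul_comm]
  rw [h2]
end Aux5
section Aux6
variable {n : ℕ}

lemma pdI_zero (f : Euc n → ℝ) : pdI (0 : Fin n → ℕ) f = f := by
  unfold pdI
  generalize List.finRange n = l
  induction l with
  | nil => rfl
  | cons i t ih => simpa using ih

lemma mdeg_zero : mdeg (0 : Fin n → ℕ) = 0 := by simp [mdeg]

lemma pd_sub_const (f : Euc n → ℝ) (c : ℝ) (j : Fin n) (x : Euc n) :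
    pd j (fun z => f z - c) x = pd j f x := by
  unfold pd
  rw [fderiv_sub_const]

lemma aux_bound1 {m : ℕ} {α : Fin n → ℕ} (hm : mdeg α = m) (j : Fin n) (ξ : Euc n) :
    |(α j : ℝ) * mono ξ (α - Pi.single j 1 : Fin n → ℕ)| ≤ (m : ℝ) * ‖ξ‖ ^ (m - 1) := by
  by_cases h : 1 ≤ α j
  · rw [abs_mul]
    have h1 : |(α j : ℝ)| ≤ (m : ℝ) := by
      rw [Nat.abs_cast]
      exact_mod_cast hm ▸ le_mdeg α j
    have h2 : |mono ξ (α - Pi.single j 1 : Fin n → ℕ)| ≤ ‖ξ‖ ^ (m - 1) := by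
      have := abs_mono_le ξ (α - Pi.single j 1 : Fin n → ℕ)
      have hd : mdeg (α - Pi.single j 1 : Fin n → ℕ) = m - 1 := by
        have := mdeg_sub_single_add_one α j h
        omega
      rwa [hd] at this
    exact mul_le_mul h1 h2 (abs_nonneg _) (Nat.cast_nonneg m)
  · have : α j = 0 := by omega
    simp only [this, Nat.cast_zero, zero_mul, abs_zero]
    positivity

lemma aux_bound2 {m : ℕ} {α : Fin n → ℕ} (hm : mdeg α = m) (k j : Fin n) (ξ : Euc n) :
    |(α k : ℝ) * (((α - Pi.single k 1 : Fin n → ℕ) j : ℝ) *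
        mono ξ (α - Pi.single k 1 - Pi.single j 1 : Fin n → ℕ))|
      ≤ (m : ℝ) * ((m : ℝ) * ‖ξ‖ ^ (m - 2)) := by
  by_cases h : 1 ≤ α k
  · have hd1 : mdeg (α - Pi.single k 1 : Fin n → ℕ) = m - 1 := by
      have := mdeg_sub_single_add_one α k h
      omega
    by_cases h2 : 1 ≤ (α - Pi.single k 1 : Fin n → ℕ) j
    · rw [abs_mul, abs_mul]
      have hk : |(α k : ℝ)| ≤ (m : ℝ) := by
        rw [Nat.abs_cast]; exact_mod_cast hm ▸ le_mdeg α k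
      have hj : |(((α - Pi.single k 1 : Fin n → ℕ) j : ℝ))| ≤ (m : ℝ) := by
        rw [Nat.abs_cast]
        have := le_mdeg (α - Pi.single k 1 : Fin n → ℕ) j
        have : (α - Pi.single k 1 : Fin n → ℕ) j ≤ m := by omega
        exact_mod_cast this
      have hmono : |mono ξ (α - Pi.single k 1 - Pi.single j 1 : Fin n → ℕ)| ≤ ‖ξ‖ ^ (m - 2) := by
        have := abs_mono_le ξ (α - Pi.single k 1 - Pi.single j 1 : Fin n → ℕ)
        have hd2 : mdeg (α - Pi.single k 1 - Pi.single j 1 : Fin n → ℕ) = m - 2 := by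
          have := mdeg_sub_single_add_one (α - Pi.single k 1 : Fin n → ℕ) j h2
          omega
        rwa [hd2] at this
      exact mul_le_mul hk (mul_le_mul hj hmono (abs_nonneg _) (Nat.cast_nonneg m))
        (mul_nonneg (abs_nonneg _) (abs_nonneg _)) (Nat.cast_nonneg m)
    · have : (α - Pi.single k 1 : Fin n → ℕ) j = 0 := by omega
      simp only [this, Nat.cast_zero, zero_mul, mul_zero, abs_zero]
      positivity
  · have : α k = 0 := by omega
    simp only [this, Nat.cast_zero, zero_mul, abs_zero]
    positivity

lemma jap_ge_one (x : Euc n) : 1 ≤ jap x := by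
  rw [jap]
  conv_lhs => rw [← Real.sqrt_one]
  exact Real.sqrt_le_sqrt (by nlinarith [sq_nonneg ‖x‖])

lemma norm_le_jap (x : Euc n) : ‖x‖ ≤ jap x := by
  rw [jap]
  conv_lhs => rw [← Real.sqrt_sq (norm_nonneg x)]
  exact Real.sqrt_le_sqrt (by nlinarith)

end Aux6
section Aux6b
variable {n : ℕ}

/-- error piece `D_j` -/
def Dt (m : ℕ) (a : (Fin n → ℕ) → Euc n → ℝ) (x ξ : Euc n) (j : Fin n) : ℝ :=
  ∑ k, (2 * x k) * (∑ α ∈ Sm n m,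
    ((α k : ℝ) * mono ξ (α - Pi.single k 1 : Fin n → ℕ)) * pd j (a α) x)

/-- error piece `P_j = ∂_{x_j} p_m` -/
def Pt (m : ℕ) (a : (Fin n → ℕ) → Euc n → ℝ) (x ξ : Euc n) (j : Fin n) : ℝ :=
  ∑ α ∈ Sm n m, mono ξ α * pd j (a α) x

/-- error piece `Q_j` -/
def Qt (m : ℕ) (a : (Fin n → ℕ) → Euc n → ℝ) (x ξ : Euc n) (j : Fin n) : ℝ :=
  ∑ k, (2 * x k) * (∑ α ∈ Sm n m, (a α x * (α k : ℝ)) *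
    (((α - Pi.single k 1 : Fin n → ℕ) j : ℝ) *
      mono ξ (α - Pi.single k 1 - Pi.single j 1 : Fin n → ℕ)))

lemma pdX_F' (m : ℕ) (a : (Fin n → ℕ) → Euc n → ℝ) (x ξ : Euc n) (j : Fin n)
    (hda : ∀ α, DifferentiableAt ℝ (a α) x) :
    pdX j (fun w ζ => ∑ k, gf m a k w ζ * (2 * w k)) x ξ
      = 2 * gf m a j x ξ + Dt m a x ξ j :=
  pdX_F m a x ξ j hda

lemma pdXi_F' (m : ℕ) (a : (Fin n → ℕ) → Euc n → ℝ) (x ξ : Euc n) (j : Fin n) :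
    pdXi j (fun w ζ => ∑ k, gf m a k w ζ * (2 * w k)) x ξ = Qt m a x ξ j :=
  pdXi_F m a x ξ j

lemma pdX_pPrin' (m : ℕ) (a : (Fin n → ℕ) → Euc n → ℝ) (x ξ : Euc n) (j : Fin n)
    (hda : ∀ α, DifferentiableAt ℝ (a α) x) :
    pdX j (pPrin m a) x ξ = Pt m a x ξ j :=
  pdX_pPrin m a x ξ j hda

lemma sum_abs_le {ι : Type*} (s : Finset ι) (f c : ι → ℝ) (h : ∀ i ∈ s, |f i| ≤ c i) :
    |∑ i ∈ s, f i| ≤ ∑ i ∈ s, c i :=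
  (Finset.abs_sum_le_sum_abs _ _).trans (Finset.sum_le_sum h)

end Aux6b
set_option maxHeartbeats 2000000 in
/-- **Lemma A.1 (Statement 6, classical Mourre estimate).** Under Assumption 1.1,
there exist `M > 0` and `R₀ > 1` such that `H_{p_m}²(|x|²) ≥ M|ξ|^{2(m−1)}`
whenever `|x| > R₀` and `ξ ≠ 0`. -/
theorem classical_mourre_estimate
    (n m : ℕ) (μ : ℝ) (hn : 1 ≤ n)
    (a : (Fin n → ℕ) → Euc n → ℝ) (b : (Fin n → ℕ) → ℝ)
    (hA : Assumption11 n m μ a b) :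
    ∃ M > (0 : ℝ), ∃ R₀ > (1 : ℝ), ∀ x ξ : Euc n, R₀ < ‖x‖ → ξ ≠ 0 →
      M * ‖ξ‖ ^ (2 * (m - 1)) ≤
        hamD (pPrin m a) (hamD (pPrin m a) (fun w _ => ‖w‖ ^ 2)) x ξ := by
  obtain ⟨C, hC, hgb⟩ := hA.grad_bounds
  have hμ : 0 < μ := hA.mu_pos
  have hm2 : 2 ≤ m := hA.m_ge
  have hda : ∀ x : Euc n, ∀ α, DifferentiableAt ℝ (a α) x :=
    fun x α => ((hA.smooth α).differentiable (by norm_num)).differentiableAt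
  -- decay constants
  have hdec : ∀ (α β : Fin n → ℕ), ∃ c : ℝ, 0 < c ∧ (α ∈ midx n m → ∀ x : Euc n,
      |pdI β (fun z => a α z - b α) x| ≤ c * jap x ^ (-(μ + (mdeg β : ℝ)))) := by
    intro α β
    by_cases h : α ∈ midx n m
    · obtain ⟨c, hc, hcb⟩ := hA.decay α h β
      exact ⟨c, hc, fun _ => hcb⟩
    · exact ⟨1, one_pos, fun h' => absurd h' h⟩
  choose Cd hCdpos hCd using hdec
  -- bound on |a α x|
  set Aa : (Fin n → ℕ) → ℝ := fun α => Cd α 0 + |b α| with hAadef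
  have hAa0 : ∀ α, 0 ≤ Aa α := by
    intro α
    have h1 := hCdpos α 0
    have h2 := abs_nonneg (b α)
    rw [hAadef]
    dsimp only
    linarith
  have hAa : ∀ α ∈ midx n m, ∀ x : Euc n, |a α x| ≤ Aa α := by
    intro α hα x
    have h1 := hCd α 0 hα x
    rw [pdI_zero] at h1
    have h2 : jap x ^ (-(μ + ((mdeg (0 : Fin n → ℕ)) : ℝ))) ≤ 1 := by
      apply Real.rpow_le_one_of_one_le_of_nonpos (jap_ge_one x)
      rw [mdeg_zero]
      push_cast
      linarith
    have h3 : |a α x - b α| ≤ Cd α 0 := by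
      calc |a α x - b α| ≤ Cd α 0 * jap x ^ (-(μ + ((mdeg (0 : Fin n → ℕ)) : ℝ))) := h1
        _ ≤ Cd α 0 * 1 := mul_le_mul_of_nonneg_left h2 (hCdpos α 0).le
        _ = Cd α 0 := mul_one _
    have h4 : |a α x| ≤ |a α x - b α| + |b α| := by
      calc |a α x| = |(a α x - b α) + b α| := by ring_nf
        _ ≤ |a α x - b α| + |b α| := abs_add_le _ _
    rw [hAadef]
    dsimp only
    linarith
  -- bound on |pd j (a α) x|
  have hpdb : ∀ α ∈ midx n m, ∀ (j : Fin n) (x : Euc n),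
      |pd j (a α) x| ≤ Cd α (Pi.single j 1) * jap x ^ (-(μ + 1)) := by
    intro α hα j x
    have h1 := hCd α (Pi.single j 1) hα x
    rw [pdI_one, pd_sub_const] at h1
    have h2 : ((mdeg (Pi.single j 1 : Fin n → ℕ)) : ℝ) = 1 := by
      rw [mdeg_single]
      norm_num
    rwa [h2] at h1
  -- global constants
  set K1 : ℝ := ∑ α ∈ Sm n m, Aa α * m with hK1def
  set K2 : Fin n → ℝ := fun j => ∑ α ∈ Sm n m, Cd α (Pi.single j 1) with hK2def
  set K3 : ℝ := ∑ α ∈ Sm n m, Aa α * (m * m) with hK3def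
  set B : ℝ := ∑ j, K2 j with hBdef
  have hK10 : 0 ≤ K1 := Finset.sum_nonneg fun α _ => mul_nonneg (hAa0 α) (Nat.cast_nonneg m)
  have hK20 : ∀ j, 0 ≤ K2 j := by
    intro j
    rw [hK2def]
    exact Finset.sum_nonneg fun α _ => (hCdpos α _).le
  have hK30 : 0 ≤ K3 := Finset.sum_nonneg fun α _ =>
    mul_nonneg (hAa0 α) (mul_nonneg (Nat.cast_nonneg m) (Nat.cast_nonneg m))
  have hB0 : 0 ≤ B := Finset.sum_nonneg fun j _ => hK20 j
  set K4 : ℝ := (2 * n * m * K1 + 2 * n * K3) * B with hK4def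
  have hK40 : 0 ≤ K4 := by
    apply mul_nonneg _ hB0
    have h1 : (0:ℝ) ≤ (n:ℝ) := Nat.cast_nonneg n
    have h2 : (0:ℝ) ≤ (m:ℝ) := Nat.cast_nonneg m
    have h3 : 0 ≤ 2 * (n:ℝ) * (m:ℝ) * K1 :=
      mul_nonneg (mul_nonneg (mul_nonneg (by norm_num) h1) h2) hK10
    have h4 : 0 ≤ 2 * (n:ℝ) * K3 := mul_nonneg (mul_nonneg (by norm_num) h1) hK30
    linarith
  set M : ℝ := (C⁻¹) ^ 2 with hMdef
  have hM : 0 < M := by rw [hMdef]; positivity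
  have hKC : (0:ℝ) ≤ K4 * C ^ 2 + 1 := by nlinarith [mul_nonneg hK40 (sq_nonneg C)]
  set r : ℝ := (K4 * C ^ 2 + 1) ^ (1 / μ) with hrdef
  have hr0 : 0 ≤ r := by rw [hrdef]; exact Real.rpow_nonneg hKC _
  refine ⟨M, hM, max 2 r, lt_of_lt_of_le one_lt_two (le_max_left _ _), ?_⟩
  intro x ξ hx hξ
  have hJ1 : 1 ≤ jap x := jap_ge_one x
  have hJ0 : 0 < jap x := lt_of_lt_of_le one_pos hJ1
  have hu0 : 0 ≤ jap x ^ (-(μ + 1)) := Real.rpow_nonneg hJ0.le _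
  have hv0 : 0 ≤ jap x ^ (-μ) := Real.rpow_nonneg hJ0.le _
  have hJu : jap x * jap x ^ (-(μ + 1)) = jap x ^ (-μ) := by
    rw [show jap x * jap x ^ (-(μ + 1)) = jap x ^ (1:ℝ) * jap x ^ (-(μ + 1)) by
      rw [Real.rpow_one]]
    rw [← Real.rpow_add hJ0]
    ring_nf
  have ht10 : 0 ≤ ‖ξ‖ ^ (m - 1) := pow_nonneg (norm_nonneg ξ) _
  have ht20 : 0 ≤ ‖ξ‖ ^ (m - 2) := pow_nonneg (norm_nonneg ξ) _
  have htm0 : 0 ≤ ‖ξ‖ ^ m := pow_nonneg (norm_nonneg ξ) _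
  have hT0 : 0 ≤ ‖ξ‖ ^ (2 * (m - 1)) := pow_nonneg (norm_nonneg ξ) _
  have ht1T : ‖ξ‖ ^ (m - 1) * ‖ξ‖ ^ (m - 1) = ‖ξ‖ ^ (2 * (m - 1)) := by
    rw [← pow_add]
    congr 1
    omega
  have htmT : ‖ξ‖ ^ m * ‖ξ‖ ^ (m - 2) = ‖ξ‖ ^ (2 * (m - 1)) := by
    rw [← pow_add]
    congr 1
    omega
  have hxk : ∀ k : Fin n, |x k| ≤ jap x := fun k =>
    (abs_coord_le_norm x k).trans (norm_le_jap x)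
  have hSmem : ∀ α ∈ Sm n m, α ∈ midx n m ∧ mdeg α = m := by
    intro α hα
    exact ⟨(Finset.mem_filter.mp hα).1, (Finset.mem_filter.mp hα).2⟩
  -- decomposition
  have hsplit : hamD (pPrin m a) (hamD (pPrin m a) (fun w _ => ‖w‖ ^ 2)) x ξ
      = 2 * (∑ j, (gf m a j x ξ) ^ 2)
        + ∑ j, (gf m a j x ξ * Dt m a x ξ j - Pt m a x ξ j * Qt m a x ξ j) := by
    rw [hamD_inner m a]
    show ∑ j, (pdXi j (pPrin m a) x ξ *
          pdX j (fun w ζ => ∑ k, gf m a k w ζ * (2 * w k)) x ξ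
        - pdX j (pPrin m a) x ξ *
          pdXi j (fun w ζ => ∑ k, gf m a k w ζ * (2 * w k)) x ξ) = _
    have hterm : ∀ j ∈ Finset.univ, (pdXi j (pPrin m a) x ξ *
          pdX j (fun w ζ => ∑ k, gf m a k w ζ * (2 * w k)) x ξ
        - pdX j (pPrin m a) x ξ *
          pdXi j (fun w ζ => ∑ k, gf m a k w ζ * (2 * w k)) x ξ)
        = 2 * (gf m a j x ξ) ^ 2
          + (gf m a j x ξ * Dt m a x ξ j - Pt m a x ξ j * Qt m a x ξ j) := by
      intro j _
      rw [pdXi_pPrin, pdX_F' m a x ξ j (hda x), pdX_pPrin' m a x ξ j (hda x), pdXi_F']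
      ring
    rw [Finset.sum_congr rfl hterm, Finset.sum_add_distrib, Finset.mul_sum]
  -- lower bound for the main term
  have hmain : M * ‖ξ‖ ^ (2 * (m - 1)) ≤ ∑ j, (gf m a j x ξ) ^ 2 := by
    have h1 := (hgb x ξ).2.1
    have h2 : (C⁻¹ * ‖ξ‖ ^ (m - 1)) ^ 2 ≤ ‖gradE (fun ζ => pPrin m a x ζ) ξ‖ ^ 2 :=
      pow_le_pow_left₀ (mul_nonneg (inv_nonneg.mpr hC.le) ht10) h1 2
    rw [gradE_pPrin_normsq] at h2
    calc M * ‖ξ‖ ^ (2 * (m - 1)) = (C⁻¹ * ‖ξ‖ ^ (m - 1)) ^ 2 := by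
          rw [hMdef, mul_pow, ← pow_mul]
          congr 2
          omega
      _ ≤ ∑ j, (gf m a j x ξ) ^ 2 := h2
  -- bounds on the pieces
  have hgfb : ∀ j, |gf m a j x ξ| ≤ K1 * ‖ξ‖ ^ (m - 1) := by
    intro j
    have h1 : |∑ α ∈ Sm n m, a α x * ((α j : ℝ) *
        mono ξ (α - Pi.single j 1 : Fin n → ℕ))|
        ≤ ∑ α ∈ Sm n m, Aa α * ((m : ℝ) * ‖ξ‖ ^ (m - 1)) := by
      apply sum_abs_le
      intro α hα
      obtain ⟨hα1, hα2⟩ := hSmem α hα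
      rw [abs_mul]
      exact mul_le_mul (hAa α hα1 x) (aux_bound1 hα2 j ξ) (abs_nonneg _) (hAa0 α)
    calc |gf m a j x ξ| ≤ ∑ α ∈ Sm n m, Aa α * ((m : ℝ) * ‖ξ‖ ^ (m - 1)) := h1
      _ = K1 * ‖ξ‖ ^ (m - 1) := by
          rw [hK1def, Finset.sum_mul]
          exact Finset.sum_congr rfl fun α _ => by ring
  have hDb : ∀ j, |Dt m a x ξ j|
      ≤ 2 * n * m * K2 j * (jap x ^ (-μ) * ‖ξ‖ ^ (m - 1)) := by
    intro j
    have hinner : ∀ k : Fin n, |∑ α ∈ Sm n m,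
        ((α k : ℝ) * mono ξ (α - Pi.single k 1 : Fin n → ℕ)) * pd j (a α) x|
        ≤ ((m : ℝ) * ‖ξ‖ ^ (m - 1) * jap x ^ (-(μ + 1))) * K2 j := by
      intro k
      have h1 : |∑ α ∈ Sm n m, ((α k : ℝ) * mono ξ (α - Pi.single k 1 : Fin n → ℕ)) *
          pd j (a α) x|
          ≤ ∑ α ∈ Sm n m, ((m : ℝ) * ‖ξ‖ ^ (m - 1) * jap x ^ (-(μ + 1))) *
            Cd α (Pi.single j 1) := by
        apply sum_abs_le
        intro α hα
        obtain ⟨hα1, hα2⟩ := hSmem α hα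
        rw [abs_mul]
        calc |(α k : ℝ) * mono ξ (α - Pi.single k 1 : Fin n → ℕ)| * |pd j (a α) x|
            ≤ ((m : ℝ) * ‖ξ‖ ^ (m - 1)) * (Cd α (Pi.single j 1) * jap x ^ (-(μ + 1))) :=
              mul_le_mul (aux_bound1 hα2 k ξ) (hpdb α hα1 j x) (abs_nonneg _)
                (by positivity)
          _ = ((m : ℝ) * ‖ξ‖ ^ (m - 1) * jap x ^ (-(μ + 1))) * Cd α (Pi.single j 1) := by
              ring
      rw [← Finset.mul_sum] at h1
      rw [hK2def]
      exact h1
    have h2 : |Dt m a x ξ j| ≤ ∑ _k : Fin n, (2 * jap x) *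
        (((m : ℝ) * ‖ξ‖ ^ (m - 1) * jap x ^ (-(μ + 1))) * K2 j) := by
      apply sum_abs_le
      intro k _
      rw [abs_mul]
      apply mul_le_mul _ (hinner k) (abs_nonneg _) (by positivity)
      rw [abs_mul, abs_two]
      exact mul_le_mul_of_nonneg_left (hxk k) (by norm_num)
    rw [Finset.sum_const, Finset.card_univ, Fintype.card_fin, nsmul_eq_mul] at h2
    calc |Dt m a x ξ j| ≤ (n : ℝ) * ((2 * jap x) *
          (((m : ℝ) * ‖ξ‖ ^ (m - 1) * jap x ^ (-(μ + 1))) * K2 j)) := h2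
      _ = 2 * n * m * K2 j * ((jap x * jap x ^ (-(μ + 1))) * ‖ξ‖ ^ (m - 1)) := by ring
      _ = 2 * n * m * K2 j * (jap x ^ (-μ) * ‖ξ‖ ^ (m - 1)) := by rw [hJu]
  have hPb : ∀ j, |Pt m a x ξ j| ≤ K2 j * (jap x ^ (-(μ + 1)) * ‖ξ‖ ^ m) := by
    intro j
    have h1 : |∑ α ∈ Sm n m, mono ξ α * pd j (a α) x|
        ≤ ∑ α ∈ Sm n m, Cd α (Pi.single j 1) * (jap x ^ (-(μ + 1)) * ‖ξ‖ ^ m) := by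
      apply sum_abs_le
      intro α hα
      obtain ⟨hα1, hα2⟩ := hSmem α hα
      rw [abs_mul]
      have hmo : |mono ξ α| ≤ ‖ξ‖ ^ m := by
        have h := abs_mono_le ξ α
        rwa [hα2] at h
      calc |mono ξ α| * |pd j (a α) x|
          ≤ ‖ξ‖ ^ m * (Cd α (Pi.single j 1) * jap x ^ (-(μ + 1))) :=
            mul_le_mul hmo (hpdb α hα1 j x) (abs_nonneg _) htm0
        _ = Cd α (Pi.single j 1) * (jap x ^ (-(μ + 1)) * ‖ξ‖ ^ m) := by ring
    rw [← Finset.sum_mul] at h1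
    rw [hK2def]
    exact h1
  have hQb : ∀ j, |Qt m a x ξ j| ≤ 2 * n * K3 * (jap x * ‖ξ‖ ^ (m - 2)) := by
    intro j
    have hinner : ∀ k : Fin n, |∑ α ∈ Sm n m, (a α x * (α k : ℝ)) *
        (((α - Pi.single k 1 : Fin n → ℕ) j : ℝ) *
          mono ξ (α - Pi.single k 1 - Pi.single j 1 : Fin n → ℕ))|
        ≤ K3 * ‖ξ‖ ^ (m - 2) := by
      intro k
      have h1 : |∑ α ∈ Sm n m, (a α x * (α k : ℝ)) *
          (((α - Pi.single k 1 : Fin n → ℕ) j : ℝ) *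
            mono ξ (α - Pi.single k 1 - Pi.single j 1 : Fin n → ℕ))|
          ≤ ∑ α ∈ Sm n m, (Aa α * ((m : ℝ) * (m : ℝ))) * ‖ξ‖ ^ (m - 2) := by
        apply sum_abs_le
        intro α hα
        obtain ⟨hα1, hα2⟩ := hSmem α hα
        have hre : (a α x * (α k : ℝ)) *
            (((α - Pi.single k 1 : Fin n → ℕ) j : ℝ) *
              mono ξ (α - Pi.single k 1 - Pi.single j 1 : Fin n → ℕ))
            = a α x * ((α k : ℝ) * (((α - Pi.single k 1 : Fin n → ℕ) j : ℝ) *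
              mono ξ (α - Pi.single k 1 - Pi.single j 1 : Fin n → ℕ))) := by ring
        rw [hre, abs_mul]
        calc |a α x| * |(α k : ℝ) * (((α - Pi.single k 1 : Fin n → ℕ) j : ℝ) *
              mono ξ (α - Pi.single k 1 - Pi.single j 1 : Fin n → ℕ))|
            ≤ Aa α * ((m : ℝ) * ((m : ℝ) * ‖ξ‖ ^ (m - 2))) :=
              mul_le_mul (hAa α hα1 x) (aux_bound2 hα2 k j ξ) (abs_nonneg _) (hAa0 α)
          _ = (Aa α * ((m : ℝ) * (m : ℝ))) * ‖ξ‖ ^ (m - 2) := by ring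
      rw [← Finset.sum_mul] at h1
      rw [hK3def]
      exact h1
    have h2 : |Qt m a x ξ j| ≤ ∑ _k : Fin n, (2 * jap x) * (K3 * ‖ξ‖ ^ (m - 2)) := by
      apply sum_abs_le
      intro k _
      rw [abs_mul]
      apply mul_le_mul _ (hinner k) (abs_nonneg _) (by positivity)
      rw [abs_mul, abs_two]
      exact mul_le_mul_of_nonneg_left (hxk k) (by norm_num)
    rw [Finset.sum_const, Finset.card_univ, Fintype.card_fin, nsmul_eq_mul] at h2
    calc |Qt m a x ξ j| ≤ (n : ℝ) * ((2 * jap x) * (K3 * ‖ξ‖ ^ (m - 2))) := h2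
      _ = 2 * n * K3 * (jap x * ‖ξ‖ ^ (m - 2)) := by ring
  -- error bound
  have herr : |∑ j, (gf m a j x ξ * Dt m a x ξ j - Pt m a x ξ j * Qt m a x ξ j)|
      ≤ K4 * (jap x ^ (-μ) * ‖ξ‖ ^ (2 * (m - 1))) := by
    have h1 : ∀ j ∈ Finset.univ,
        |gf m a j x ξ * Dt m a x ξ j - Pt m a x ξ j * Qt m a x ξ j|
        ≤ (2 * n * m * K1 * K2 j + 2 * n * K3 * K2 j) *
          (jap x ^ (-μ) * ‖ξ‖ ^ (2 * (m - 1))) := by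
      intro j _
      have ha1 : |gf m a j x ξ * Dt m a x ξ j|
          ≤ (2 * n * m * K1 * K2 j) * (jap x ^ (-μ) * ‖ξ‖ ^ (2 * (m - 1))) := by
        rw [abs_mul]
        calc |gf m a j x ξ| * |Dt m a x ξ j|
            ≤ (K1 * ‖ξ‖ ^ (m - 1)) * (2 * n * m * K2 j *
              (jap x ^ (-μ) * ‖ξ‖ ^ (m - 1))) :=
              mul_le_mul (hgfb j) (hDb j) (abs_nonneg _)
                (mul_nonneg hK10 ht10)
          _ = (2 * n * m * K1 * K2 j) *
              (jap x ^ (-μ) * (‖ξ‖ ^ (m - 1) * ‖ξ‖ ^ (m - 1))) := by ring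
          _ = (2 * n * m * K1 * K2 j) *
              (jap x ^ (-μ) * ‖ξ‖ ^ (2 * (m - 1))) := by rw [ht1T]
      have ha2 : |Pt m a x ξ j * Qt m a x ξ j|
          ≤ (2 * n * K3 * K2 j) * (jap x ^ (-μ) * ‖ξ‖ ^ (2 * (m - 1))) := by
        rw [abs_mul]
        calc |Pt m a x ξ j| * |Qt m a x ξ j|
            ≤ (K2 j * (jap x ^ (-(μ + 1)) * ‖ξ‖ ^ m)) *
              (2 * n * K3 * (jap x * ‖ξ‖ ^ (m - 2))) :=
              mul_le_mul (hPb j) (hQb j) (abs_nonneg _)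
                (mul_nonneg (hK20 j) (mul_nonneg hu0 htm0))
          _ = (2 * n * K3 * K2 j) * ((jap x * jap x ^ (-(μ + 1))) *
              (‖ξ‖ ^ m * ‖ξ‖ ^ (m - 2))) := by ring
          _ = (2 * n * K3 * K2 j) * (jap x ^ (-μ) * ‖ξ‖ ^ (2 * (m - 1))) := by
              rw [hJu, htmT]
      calc |gf m a j x ξ * Dt m a x ξ j - Pt m a x ξ j * Qt m a x ξ j|
          = |gf m a j x ξ * Dt m a x ξ j + -(Pt m a x ξ j * Qt m a x ξ j)| := by
            rw [sub_eq_add_neg]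
        _ ≤ |gf m a j x ξ * Dt m a x ξ j| + |-(Pt m a x ξ j * Qt m a x ξ j)| :=
            abs_add_le _ _
        _ = |gf m a j x ξ * Dt m a x ξ j| + |Pt m a x ξ j * Qt m a x ξ j| := by
            rw [abs_neg]
        _ ≤ (2 * n * m * K1 * K2 j + 2 * n * K3 * K2 j) *
            (jap x ^ (-μ) * ‖ξ‖ ^ (2 * (m - 1))) := by
            rw [add_mul]
            exact add_le_add ha1 ha2
    calc |∑ j, (gf m a j x ξ * Dt m a x ξ j - Pt m a x ξ j * Qt m a x ξ j)|
        ≤ ∑ j, (2 * n * m * K1 * K2 j + 2 * n * K3 * K2 j) *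
          (jap x ^ (-μ) * ‖ξ‖ ^ (2 * (m - 1))) := sum_abs_le _ _ _ h1
      _ = ∑ j, ((2 * n * m * K1 + 2 * n * K3) *
          (jap x ^ (-μ) * ‖ξ‖ ^ (2 * (m - 1)))) * K2 j :=
          Finset.sum_congr rfl fun j _ => by ring
      _ = ((2 * n * m * K1 + 2 * n * K3) *
          (jap x ^ (-μ) * ‖ξ‖ ^ (2 * (m - 1)))) * B := by
          rw [hBdef, ← Finset.mul_sum]
      _ = K4 * (jap x ^ (-μ) * ‖ξ‖ ^ (2 * (m - 1))) := by
          rw [hK4def]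
          ring
  -- smallness of the error coefficient
  have hjapr : r ≤ jap x := by
    have h1 : r ≤ max 2 r := le_max_right _ _
    exact le_trans h1 (le_trans hx.le (norm_le_jap x))
  have hrmu : K4 * C ^ 2 + 1 ≤ jap x ^ μ := by
    have h1 : r ^ μ ≤ jap x ^ μ := Real.rpow_le_rpow hr0 hjapr hμ.le
    have h2 : r ^ μ = K4 * C ^ 2 + 1 := by
      rw [hrdef, ← Real.rpow_mul hKC, one_div_mul_cancel (ne_of_gt hμ), Real.rpow_one]
    linarith
  have hK4v : K4 * jap x ^ (-μ) ≤ M := by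
    have hJmu : 0 < jap x ^ μ := Real.rpow_pos_of_pos hJ0 μ
    have hv' : jap x ^ (-μ) = (jap x ^ μ)⁻¹ := by
      rw [← Real.rpow_neg_one (jap x ^ μ), ← Real.rpow_mul hJ0.le]
      ring_nf
    rw [hv', hMdef]
    have hM' : (C⁻¹ : ℝ) ^ 2 = 1 / C ^ 2 := by
      rw [inv_pow]
      exact inv_eq_one_div _
    rw [hM', ← div_eq_mul_inv, div_le_div_iff₀ hJmu (by positivity)]
    nlinarith [hrmu]
  -- conclusion
  rw [hsplit]
  have herr1 : -(K4 * (jap x ^ (-μ) * ‖ξ‖ ^ (2 * (m - 1))))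
      ≤ ∑ j, (gf m a j x ξ * Dt m a x ξ j - Pt m a x ξ j * Qt m a x ξ j) :=
    (abs_le.mp herr).1
  have hKvT : K4 * (jap x ^ (-μ) * ‖ξ‖ ^ (2 * (m - 1)))
      ≤ M * ‖ξ‖ ^ (2 * (m - 1)) := by
    calc K4 * (jap x ^ (-μ) * ‖ξ‖ ^ (2 * (m - 1)))
        = (K4 * jap x ^ (-μ)) * ‖ξ‖ ^ (2 * (m - 1)) := by ring
      _ ≤ M * ‖ξ‖ ^ (2 * (m - 1)) := mul_le_mul_of_nonneg_right hK4v hT0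
  linarith [hmain, herr1, hKvT]

end Paper
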